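/- Any valid annotation of an automaton on a cutpoint set K can be extended to a valid full annotation, i.e., a valid annotation whose cutpoint set is all of Ctrl, agreeing with the original on K. -/

import Mathlib

/-- An automaton with control points `C` and data stores `S`. -/
structure Automaton (C S : Type) where
  init : C
  fin : C
  step : C × S → C × S → Prop

namespace Automaton

variable {C S : Type}

/-- A trace: a nonempty list of states consecutive under the transition relation. -/
def IsTrace (A : Automaton C S) (τ : List (C × S)) : Prop :=
  τ ≠ [] ∧ List.Chain' A.step τ

/-- An initial trace starts at control point `init`. -/
def InitTrace (A : Automaton C S) (τ : List (C × S)) : Prop :=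
  A.IsTrace τ ∧ ∃ s, τ.head? = some (A.init, s)

/-- Basic semantics of unary specs: every finite initial trace from a `P`-store
that ends at control `fin` ends in a `Q`-store. -/
def Sat (A : Automaton C S) (P Q : S → Prop) : Prop :=
  ∀ τ s₀ n sl, A.InitTrace τ → τ.head? = some (A.init, s₀) → P s₀ →
    τ.getLast? = some (n, sl) → n = A.fin → Q sl

/-- Edge of the control-flow graph. -/
def Edge (A : Automaton C S) (n m : C) : Prop := ∃ s t, A.step (n, s) (m, t)

/-- A cutpoint set contains `init` and `fin` and cuts every CFG cycle. -/
def IsCutset (A : Automaton C S) (K : Set C) : Prop :=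
  A.init ∈ K ∧ A.fin ∈ K ∧
  ∀ vs : List C, List.Chain' A.Edge vs → 1 < vs.length →
    vs.head? = vs.getLast? → ∃ v ∈ vs, v ∈ K

/-- A segment: a CFG path of length > 1 with endpoints in `K` and no
intermediate cutpoints. -/
def IsSeg (A : Automaton C S) (K : Set C) (vs : List C) : Prop :=
  List.Chain' A.Edge vs ∧ 1 < vs.length ∧
  (∃ h, vs.head? = some h ∧ h ∈ K) ∧
  (∃ l, vs.getLast? = some l ∧ l ∈ K) ∧
  ∀ i (hi : i < vs.length), 0 < i → i + 1 < vs.length → vs.get ⟨i, hi⟩ ∉ K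

/-- The control path of a trace. -/
def cpath (τ : List (C × S)) : List C := τ.map Prod.fst

/-- Validity of an annotation: every verification condition along segments
between cutpoints holds. -/
def ValidAnno (A : Automaton C S) (K : Set C) (an : C → S → Prop) : Prop :=
  ∀ vs τ α ω s t, A.IsSeg K vs → A.IsTrace τ → cpath τ = vs →
    τ.head? = some (α, s) → τ.getLast? = some (ω, t) → an α s → an ω t


end Automaton

open Automaton

/-- **Extension of valid annotations**: any valid annotation on a cutpoint set
`K` can be extended to a valid full annotation (whose cutpoint set is all of
`Ctrl`), agreeing with the original on `K`. -/
lemma cpath_chain {C S : Type} {A : Automaton C S} {τ : List (C × S)}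
    (h : List.Chain' A.step τ) : List.Chain' A.Edge (Automaton.cpath τ) := by
  unfold List.Chain' at *
  rw [Automaton.cpath, List.isChain_map]
  exact h.imp (fun p q hpq => ⟨p.2, q.2, by simpa using hpq⟩)

theorem extend_valid_annotation {C S : Type} [Finite C]
    (A : Automaton C S) (K : Set C) (an : C → S → Prop)
    (hne : A.init ≠ A.fin)
    (hfinality : ∀ p q, A.step p q → p.1 ≠ A.fin)
    (hnonstutter : ∀ p q, A.step p q → p.1 ≠ q.1)
    (hK : A.IsCutset K)
    (hvalid : A.ValidAnno K an) :
    ∃ an' : C → S → Prop, (∀ n ∈ K, an' n = an n) ∧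
      A.ValidAnno Set.univ an' := by
  classical
  set an' : C → S → Prop := fun n s =>
    (n ∈ K ∧ an n s) ∨ (n ∉ K ∧ ∃ τ k s₀, A.IsTrace τ ∧ τ.head? = some (k, s₀) ∧
      k ∈ K ∧ an k s₀ ∧ τ.getLast? = some (n, s) ∧ ∀ c ∈ (cpath τ).tail, c ∉ K)
    with han'
  refine ⟨an', ?_, ?_⟩
  · intro n hn
    funext s
    apply propext
    constructor
    · rintro (⟨_, h⟩ | ⟨hn', _⟩)
      · exact h
      · exact absurd hn hn'
    · exact fun h => Or.inl ⟨hn, h⟩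
  · intro vs τ α ω s t hseg htr hcp hhead hlast ha
    obtain ⟨hchain, hlen, _, _, hmid⟩ := hseg
    -- the segment has length exactly 2
    have h2 : vs.length = 2 := by
      by_contra h
      have h3 : 2 < vs.length := by omega
      exact hmid 1 (by omega) one_pos (by omega) (Set.mem_univ _)
    have hτ2 : τ.length = 2 := by
      have := congrArg List.length hcp
      simp only [cpath, List.length_map] at this
      omega
    obtain ⟨a, b, rfl⟩ := List.length_eq_two.mp hτ2
    have ha' : a = (α, s) := by simpa using hhead
    have hb' : b = (ω, t) := by simpa using hlast
    subst ha' hb'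
    have hstep : A.step (α, s) (ω, t) := by
      have := htr.2
      simpa using this.rel_head
    -- case analysis
    by_cases hαK : α ∈ K
    · have hans : an α s := by
        rcases ha with ⟨_, h⟩ | ⟨h, _⟩
        · exact h
        · exact absurd hαK h
      by_cases hωK : ω ∈ K
      · refine Or.inl ⟨hωK, ?_⟩
        refine hvalid [α, ω] [(α, s), (ω, t)] α ω s t ?_ ⟨by simp, ?_⟩ rfl (by simp)
          (by simp) hans
        · refine ⟨?_, by simp, ⟨α, by simp, hαK⟩, ⟨ω, by simp, hωK⟩, ?_⟩
          · exact List.isChain_pair.mpr ⟨s, t, hstep⟩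
          · intro i hi h0 h1
            simp at hi h1; omega
        · exact List.isChain_pair.mpr hstep
      · refine Or.inr ⟨hωK, [(α, s), (ω, t)], α, s, ⟨by simp, List.isChain_pair.mpr hstep⟩,
          by simp, hαK, hans, by simp, ?_⟩
        intro c hc
        simp [cpath] at hc
        subst hc; exact hωK
    · -- α ∉ K : unfold the strongest-postcondition witness
      rcases ha with ⟨h, _⟩ | ⟨_, τ', k, s₀, htr', hh', hkK, hank, hl', htail⟩
      · exact absurd h hαK
      obtain ⟨p, τ'', rfl⟩ : ∃ p l, τ' = p :: l := by
        cases τ' with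
        | nil => simp at hh'
        | cons p l => exact ⟨p, l, rfl⟩
      have hp : p = (k, s₀) := by simpa using hh'
      subst hp
      -- the extended trace
      set σ : List (C × S) := ((k, s₀) :: τ'') ++ [(ω, t)] with hσ
      have hchainσ : List.Chain' A.step σ := by
        unfold List.Chain'
        rw [List.isChain_append]
        refine ⟨htr'.2, List.isChain_singleton _, ?_⟩
        intro x hx y hy
        simp at hy; subst hy
        rw [hl'] at hx
        simp at hx; subst hx; exact hstep
      have htrσ : A.IsTrace σ := ⟨by simp [hσ], hchainσ⟩
      have hheadσ : σ.head? = some (k, s₀) := by simp [hσ]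
      have hlastσ : σ.getLast? = some (ω, t) := List.getLast?_concat
      have hcpσ : cpath σ = (k :: cpath τ'') ++ [ω] := by simp [cpath, hσ]
      have htail' : ∀ c ∈ cpath τ'', c ∉ K := by
        intro c hc
        exact htail c (by simpa [cpath] using hc)
      by_cases hωK : ω ∈ K
      · refine Or.inl ⟨hωK, ?_⟩
        refine hvalid ((k :: cpath τ'') ++ [ω]) σ k ω s₀ t ?_ htrσ hcpσ hheadσ hlastσ hank
        refine ⟨by rw [← hcpσ]; exact cpath_chain hchainσ, by simp, ⟨k, by simp, hkK⟩,
          ⟨ω, List.getLast?_concat, hωK⟩, ?_⟩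
        intro i hi h0 h1
        have hlenL : ((k :: cpath τ'') ++ [ω]).length = (cpath τ'').length + 2 := by simp
        obtain ⟨j, rfl⟩ : ∃ j, i = j + 1 := ⟨i - 1, by omega⟩
        have hj : j < (cpath τ'').length := by omega
        have hget : ((k :: cpath τ'') ++ [ω]).get ⟨j + 1, hi⟩ = (cpath τ'').get ⟨j, hj⟩ := by
          rw [List.get_eq_getElem, List.get_eq_getElem,
            List.getElem_append_left (by simp; omega)]
          simp
        rw [hget]
        exact htail' _ (List.get_mem _ _)
      · refine Or.inr ⟨hωK, σ, k, s₀, htrσ, hheadσ, hkK, hank, hlastσ, ?_⟩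
        intro c hc
        rw [hcpσ] at hc
        simp at hc
        rcases hc with hc | hc
        · exact htail' c hc
        · subst hc; exact hωK
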